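/- For the Lotka-Volterra system ẋ = diag(x)A(x - 1ₙ) on the interior of the positive orthant with b ≠ 0, the function V(x) = (kᵀ(x - 1ₙ) - 1/b)·∏ᵢ xᵢ^{b kᵢ} + 1/b satisfies V̇(x) = (x - 1ₙ)ᵀ ((diag(k) + b k kᵀ)A)ˢ (x - 1ₙ) · ∏ᵢ xᵢ^{b kᵢ}. -/

import Mathlib

open Matrix

/-- For ẋ = diag(x)A(x - 1ₙ) with b ≠ 0, the function
V(x) = (kᵀ(x-1ₙ) - 1/b)·∏ᵢ xᵢ^{b kᵢ} + 1/b satisfies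
V̇(x) = (x-1ₙ)ᵀ ((diag(k) + b k kᵀ)A)ˢ (x-1ₙ) · ∏ᵢ xᵢ^{b kᵢ}. -/
theorem stmt1 (n : ℕ) (A : Matrix (Fin n) (Fin n) ℝ) (k : Fin n → ℝ) (b : ℝ) (hb : b ≠ 0)
    (V : (Fin n → ℝ) → ℝ)
    (hV : ∀ x : Fin n → ℝ,
      V x = (k ⬝ᵥ (x - 1) - 1/b) * ∏ i, (x i) ^ (b * k i) + 1/b)
    (F : (Fin n → ℝ) → (Fin n → ℝ))
    (hF : ∀ x : Fin n → ℝ, F x = fun i => x i * (A *ᵥ (x - 1)) i)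
    (R : Matrix (Fin n) (Fin n) ℝ)
    (hR : R = (1/2 : ℝ) •
      ((Matrix.diagonal k + b • Matrix.vecMulVec k k) * A
        + ((Matrix.diagonal k + b • Matrix.vecMulVec k k) * A)ᵀ)) :
    ∀ x : Fin n → ℝ, (∀ i, 0 < x i) →
      fderiv ℝ V x (F x) = ((x - 1) ⬝ᵥ (R *ᵥ (x - 1))) * ∏ i, (x i) ^ (b * k i) := by
  intro x hx
  -- the smooth model W
  set W : (Fin n → ℝ) → ℝ := fun y =>
    ((∑ i, k i * (y i - 1)) - 1/b) * Real.exp (∑ i, (b * k i) * Real.log (y i)) + 1/b with hWdef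
  -- V = W near x
  have hopen : IsOpen {y : Fin n → ℝ | ∀ i, 0 < y i} := by
    have : {y : Fin n → ℝ | ∀ i, 0 < y i} = Set.pi Set.univ (fun _ => Set.Ioi (0:ℝ)) := by
      ext y; simp [Set.mem_pi]
    rw [this]
    exact isOpen_set_pi Set.finite_univ (fun i _ => isOpen_Ioi)
  have hWV : ∀ y : Fin n → ℝ, (∀ i, 0 < y i) → V y = W y := by
    intro y hy
    rw [hV]; simp only [hWdef]
    have : Real.exp (∑ i, (b * k i) * Real.log (y i)) = ∏ i, (y i) ^ (b * k i) := by
      rw [Real.exp_sum]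
      refine Finset.prod_congr rfl fun i _ => ?_
      rw [Real.rpow_def_of_pos (hy i), mul_comm]
    rw [this]
    simp [dotProduct, Pi.sub_apply]
  have hev : V =ᶠ[nhds x] W := by
    filter_upwards [hopen.mem_nhds hx] with y hy using hWV y hy
  rw [hev.fderiv_eq]
  -- derivative of W
  have hlog : ∀ i : Fin n, HasFDerivAt (fun y : Fin n → ℝ => Real.log (y i))
      ((x i)⁻¹ • (ContinuousLinearMap.proj i : (Fin n → ℝ) →L[ℝ] ℝ)) x :=
    fun i => by
      have := (Real.hasDerivAt_log (hx i).ne').comp_hasFDerivAt x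
        (ContinuousLinearMap.proj i : (Fin n → ℝ) →L[ℝ] ℝ).hasFDerivAt
      exact this
  have hsum : HasFDerivAt (fun y : Fin n → ℝ => ∑ i, (b * k i) * Real.log (y i))
      (∑ i, (b * k i) • ((x i)⁻¹ • (ContinuousLinearMap.proj i : (Fin n → ℝ) →L[ℝ] ℝ))) x :=
    HasFDerivAt.fun_sum fun i _ => (hlog i).const_mul (b * k i)
  have hexp : HasFDerivAt (fun y : Fin n → ℝ => Real.exp (∑ i, (b * k i) * Real.log (y i)))
      (Real.exp (∑ i, (b * k i) * Real.log (x i)) •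
        ∑ i, (b * k i) • ((x i)⁻¹ • (ContinuousLinearMap.proj i : (Fin n → ℝ) →L[ℝ] ℝ))) x :=
    (Real.hasDerivAt_exp _).comp_hasFDerivAt x hsum
  have haff : HasFDerivAt (fun y : Fin n → ℝ => (∑ i, k i * (y i - 1)) - 1/b)
      (∑ i, k i • (ContinuousLinearMap.proj i : (Fin n → ℝ) →L[ℝ] ℝ)) x := by
    exact (HasFDerivAt.fun_sum fun i _ =>
      (((ContinuousLinearMap.proj i : (Fin n → ℝ) →L[ℝ] ℝ).hasFDerivAt.sub_const 1).const_mul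
        (k i))).sub_const (1/b)
  have hW : HasFDerivAt W _ x := ((haff.mul hexp).add_const (1/b))
  rw [hW.fderiv]
  -- evaluate
  set P : ℝ := Real.exp (∑ i, (b * k i) * Real.log (x i)) with hP
  have hPprod : P = ∏ i, (x i) ^ (b * k i) := by
    rw [hP, Real.exp_sum]
    exact Finset.prod_congr rfl fun i _ => by rw [Real.rpow_def_of_pos (hx i), mul_comm]
  simp only [ContinuousLinearMap.add_apply, ContinuousLinearMap.smul_apply,
    ContinuousLinearMap.sum_apply, ContinuousLinearMap.proj_apply, smul_eq_mul]
  rw [← hPprod]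
  set u : Fin n → ℝ := A *ᵥ (x - 1) with hu
  have hF1 : ∀ i, F x i = x i * u i := by intro i; rw [hF]
  have e1 : ∑ i, b * k i * ((x i)⁻¹ * F x i) = b * ∑ i, k i * u i := by
    rw [Finset.mul_sum]
    refine Finset.sum_congr rfl fun i _ => ?_
    rw [hF1]
    field_simp [(hx i).ne']
  have e2 : ∑ i, k i * F x i = ∑ i, k i * (x i * u i) :=
    Finset.sum_congr rfl fun i _ => by rw [hF1]
  have hvmv : Matrix.vecMulVec k k *ᵥ u = (k ⬝ᵥ u) • k := by
    ext i
    simp only [Matrix.vecMulVec, Matrix.mulVec, dotProduct, Matrix.of_apply,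
      Pi.smul_apply, smul_eq_mul, Finset.mul_sum]
    rw [Finset.sum_mul]
    exact Finset.sum_congr rfl fun j _ => by ring
  set M : Matrix (Fin n) (Fin n) ℝ := (Matrix.diagonal k + b • Matrix.vecMulVec k k) * A with hM
  have hsym : (x - 1) ⬝ᵥ Mᵀ *ᵥ (x - 1) = (x - 1) ⬝ᵥ M *ᵥ (x - 1) := by
    rw [Matrix.dotProduct_mulVec _ Mᵀ, Matrix.vecMul_transpose, dotProduct_comm]
  have hRM : (x - 1) ⬝ᵥ R *ᵥ (x - 1) = (x - 1) ⬝ᵥ M *ᵥ (x - 1) := by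
    rw [hR, Matrix.smul_mulVec, Matrix.add_mulVec, dotProduct_smul, dotProduct_add,
      hsym, smul_eq_mul]
    ring
  have hMexp : (x - 1) ⬝ᵥ M *ᵥ (x - 1) =
      (∑ i, k i * ((x i - 1) * u i)) + b * ((∑ i, k i * (x i - 1)) * (∑ i, k i * u i)) := by
    rw [hM, ← Matrix.mulVec_mulVec, ← hu, Matrix.add_mulVec, Matrix.smul_mulVec, hvmv,
      dotProduct_add, dotProduct_smul]
    have h1 : (x - 1) ⬝ᵥ (Matrix.diagonal k *ᵥ u) = ∑ i, k i * ((x i - 1) * u i) := by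
      simp [dotProduct, Matrix.mulVec_diagonal]
      exact Finset.sum_congr rfl fun i _ => by ring
    have h2 : (x - 1) ⬝ᵥ ((k ⬝ᵥ u) • k) = (∑ i, k i * (x i - 1)) * (∑ i, k i * u i) := by
      rw [dotProduct_smul, smul_eq_mul, mul_comm]
      congr 1
      simp only [dotProduct, Pi.sub_apply, Pi.one_apply]
      exact Finset.sum_congr rfl fun i _ => mul_comm _ _
    rw [h1, h2, smul_eq_mul]
  have e3 : ∑ i, k i * ((x i - 1) * u i)
      = (∑ i, k i * (x i * u i)) - ∑ i, k i * u i := by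
    rw [← Finset.sum_sub_distrib]
    exact Finset.sum_congr rfl fun i _ => by ring
  rw [e1, e2, hRM, hMexp, e3]
  field_simp
  ring
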